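/- Let v : ℝ → ℝ be an odd, 2ℓ-periodic function whose restriction to (0,ℓ) is in L²(0,ℓ). Then sup over t > 0 and x ∈ [0,ℓ] of |(1/2) ∫_{x-t}^{x+t} v(y) dy| is at most √ℓ · ‖v‖_{L²(0,ℓ)}. -/

import Mathlib

open MeasureTheory

/-- For `v : ℝ → ℝ` odd, `2ℓ`-periodic, locally integrable, whose restriction to `(0,ℓ)`
is in `L²(0,ℓ)`, the quantity `|(1/2) ∫_{x-t}^{x+t} v|` is bounded by
`√ℓ · ‖v‖_{L²(0,ℓ)}` uniformly in `t > 0` and `x ∈ [0,ℓ]`. -/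
theorem stmt_1 (ℓ : ℝ) (hℓ : 0 < ℓ) (v : ℝ → ℝ)
    (hodd : ∀ y, v (-y) = -v y) (hper : ∀ y, v (y + 2 * ℓ) = v y)
    (hloc : LocallyIntegrable v volume)
    (hL2 : MemLp v 2 (volume.restrict (Set.Ioo 0 ℓ))) :
    ∀ t > (0 : ℝ), ∀ x ∈ Set.Icc (0 : ℝ) ℓ,
      |(1 / 2) * ∫ y in (x - t)..(x + t), v y|
        ≤ Real.sqrt ℓ * (eLpNorm v 2 (volume.restrict (Set.Ioo 0 ℓ))).toReal := by
  set μ := volume.restrict (Set.Ioo (0:ℝ) ℓ) with hμdef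
  set C := (eLpNorm v 2 μ).toReal with hC
  have hC0 : 0 ≤ C := ENNReal.toReal_nonneg
  have hint : ∀ a b : ℝ, IntervalIntegrable v volume a b := by
    intro a b
    rw [intervalIntegrable_iff]
    exact (hloc.integrableOn_isCompact isCompact_uIcc).mono_set Set.Ioc_subset_Icc_self
  set V : ℝ → ℝ := fun z => ∫ y in (0:ℝ)..z, v y with hVdef
  have hper' : Function.Periodic v (2*ℓ) := hper
  -- integral over one period is zero
  have hzero : ∫ y in (-ℓ)..ℓ, v y = 0 := by
    have h1 : ∫ y in (-ℓ)..ℓ, v (-y) = ∫ y in (-ℓ)..ℓ, v y := by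
      rw [intervalIntegral.integral_comp_neg]; norm_num
    have h2 : ∫ y in (-ℓ)..ℓ, v (-y) = -∫ y in (-ℓ)..ℓ, v y := by
      simp only [hodd]
      exact intervalIntegral.integral_neg
    linarith
  -- V is even
  have heven : ∀ z, V (-z) = V z := by
    intro z
    have h1 : ∫ y in (0:ℝ)..z, v (-y) = ∫ y in (-z)..(0:ℝ), v y := by
      rw [intervalIntegral.integral_comp_neg]; norm_num
    have h2 : ∫ y in (0:ℝ)..z, v (-y) = -V z := by
      simp only [hodd]
      exact intervalIntegral.integral_neg
    have h3 : ∫ y in (-z)..(0:ℝ), v y = -V (-z) :=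
      intervalIntegral.integral_symm 0 (-z)
    rw [h2, h3] at h1
    linarith
  -- V is periodic
  have hVper : Function.Periodic V (2*ℓ) := by
    intro z
    have hadd := intervalIntegral.integral_add_adjacent_intervals
      (hint 0 z) (hint z (z + 2*ℓ))
    have hp : ∫ y in z..(z + 2*ℓ), v y = ∫ y in (-ℓ)..(-ℓ + 2*ℓ), v y :=
      hper'.intervalIntegral_add_eq z (-ℓ)
    have hℓ' : -ℓ + 2*ℓ = ℓ := by ring
    rw [hℓ', hzero] at hp
    show (∫ y in (0:ℝ)..(z + 2*ℓ), v y) = V z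
    rw [← hadd, hp]
    simp [V]
  -- key estimate on [0, ℓ]
  have key : ∀ u, 0 ≤ u → u ≤ ℓ → |V u| ≤ Real.sqrt ℓ * C := by
    intro u h0 h1
    set ν := volume.restrict (Set.Ioc (0:ℝ) u) with hν
    have hmeas : AEStronglyMeasurable v ν := hloc.aestronglyMeasurable.restrict
    have step1 : |V u| ≤ ∫ y in Set.Ioc 0 u, ‖v y‖ := by
      have : V u = ∫ y in Set.Ioc 0 u, v y := intervalIntegral.integral_of_le h0
      rw [this, ← Real.norm_eq_abs]
      exact norm_integral_le_integral_norm v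
    have step2 : ∫ y in Set.Ioc 0 u, ‖v y‖ = (eLpNorm v 1 ν).toReal := by
      rw [eLpNorm_one_eq_lintegral_enorm, integral_norm_eq_lintegral_enorm hmeas]
    have step3 : eLpNorm v 1 ν ≤ eLpNorm v 2 ν * (ENNReal.ofReal u) ^ (1/2 : ℝ) := by
      have h := eLpNorm_le_eLpNorm_mul_rpow_measure_univ (p := 1) (q := 2)
        (by norm_num) hmeas
      have hνuniv : ν Set.univ = ENNReal.ofReal u := by
        rw [hν, Measure.restrict_apply_univ, Real.volume_Ioc, sub_zero]
      rw [hνuniv] at h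
      convert h using 3
      norm_num
    have step4 : eLpNorm v 2 ν ≤ eLpNorm v 2 μ := by
      have hμ : μ = volume.restrict (Set.Ioc (0:ℝ) ℓ) :=
        Measure.restrict_congr_set Ioo_ae_eq_Ioc
      rw [hμ]
      exact eLpNorm_mono_measure v (Measure.restrict_mono (Set.Ioc_subset_Ioc_right h1) le_rfl)
    have step5 : eLpNorm v 2 ν * (ENNReal.ofReal u) ^ (1/2 : ℝ)
        ≤ eLpNorm v 2 μ * (ENNReal.ofReal ℓ) ^ (1/2 : ℝ) :=
      mul_le_mul' step4 (ENNReal.rpow_le_rpow (ENNReal.ofReal_le_ofReal h1) (by norm_num))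
    have htop : eLpNorm v 2 μ * (ENNReal.ofReal ℓ) ^ (1/2 : ℝ) ≠ ⊤ :=
      ENNReal.mul_ne_top hL2.2.ne (by simp [ENNReal.rpow_ne_top_of_nonneg])
    have step6 : (eLpNorm v 1 ν).toReal
        ≤ (eLpNorm v 2 μ * (ENNReal.ofReal ℓ) ^ (1/2 : ℝ)).toReal :=
      ENNReal.toReal_mono htop (step3.trans step5)
    have step7 : (eLpNorm v 2 μ * (ENNReal.ofReal ℓ) ^ (1/2 : ℝ)).toReal
        = Real.sqrt ℓ * C := by
      rw [ENNReal.toReal_mul, mul_comm]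
      congr 1
      rw [← ENNReal.toReal_rpow, ENNReal.toReal_ofReal hℓ.le]
      exact (Real.sqrt_eq_rpow ℓ).symm
    calc |V u| ≤ (eLpNorm v 1 ν).toReal := step2 ▸ step1
      _ ≤ _ := step6
      _ = _ := step7
  -- bound for all reals
  have keyAll : ∀ z, |V z| ≤ Real.sqrt ℓ * C := by
    intro z
    obtain ⟨y, hy, hzy⟩ := hVper.exists_mem_Ico (by linarith) z (-ℓ)
    rw [hzy]
    rcases le_or_gt 0 y with h | h
    · exact key y h (by have := hy.2; linarith)
    · rw [← heven y]
      exact key (-y) (by linarith) (by have := hy.1; linarith)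
  intro t ht x hx
  have hsplit : ∫ y in (x - t)..(x + t), v y = V (x + t) - V (x - t) := by
    have hadd := intervalIntegral.integral_add_adjacent_intervals
      (hint 0 (x - t)) (hint (x - t) (x + t))
    simp only [V]
    linarith
  rw [hsplit]
  have h1 := keyAll (x + t)
  have h2 := keyAll (x - t)
  have h3 : |V (x + t) - V (x - t)| ≤ |V (x + t)| + |V (x - t)| := abs_sub _ _
  rw [abs_mul]
  have : |(1:ℝ)/2| = 1/2 := by norm_num
  rw [this]
  nlinarith [abs_nonneg (V (x+t) - V (x-t))]
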